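/- For v_k = 2·cos(2kπ/(2n+1)), the product Π_{k=1}^{n} v_k equals (-1)^{n/2} if n is even and (-1)^{(n+1)/2} if n is odd. -/

import Mathlib

open Real

theorem stmt_2 (n : ℕ) (hn : 0 < n) (v : ℕ → ℝ)
    (hv : ∀ k, v k = 2 * Real.cos (2 * k * π / (2 * n + 1))) :
    ∏ k ∈ Finset.Icc 1 n, v k =
      if Even n then (-1 : ℝ) ^ (n / 2) else (-1 : ℝ) ^ ((n + 1) / 2) := by
  have hNpos : (0:ℝ) < 2 * n + 1 := by positivity
  set s : ℕ → ℝ := fun j => Real.sin (2 * j * π / (2 * n + 1)) with hs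
  have hpos : ∀ j ∈ Finset.Icc 1 n, 0 < s j := by
    intro j hj
    simp only [Finset.mem_Icc] at hj
    have h1 : (1:ℝ) ≤ (j:ℝ) := by exact_mod_cast hj.1
    have h2 : (j:ℝ) ≤ n := by exact_mod_cast hj.2
    apply Real.sin_pos_of_pos_of_lt_pi
    · apply div_pos _ hNpos
      nlinarith [Real.pi_pos]
    · rw [div_lt_iff₀ hNpos]
      nlinarith [Real.pi_pos]
  have hsign : ∀ k, n < 2*k → 2*k ≤ 2*n → s (2*k) = - s (2*n+1 - 2*k) := by
    intro k h1 h2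
    have hc : ((2*n+1 - 2*k : ℕ) : ℝ) = 2*(n:ℝ)+1 - 2*k := by
      have : 2*k ≤ 2*n+1 := by omega
      push_cast [this]; ring
    have key : 2 * ((2*k:ℕ):ℝ) * π / (2*n+1)
        = 2*π - 2 * ((2*n+1-2*k : ℕ):ℝ) * π / (2*(n:ℝ)+1) := by
      rw [hc]; field_simp; push_cast; ring
    simp only [hs]
    rw [key, Real.sin_sub, Real.sin_two_pi, Real.cos_two_pi]
    ring
  have hdouble : ∀ k, s (2*k) = v k * s k := by
    intro k
    have h : 2 * ((2*k:ℕ):ℝ) * π / (2*(n:ℝ)+1) = 2 * (2 * k * π / (2*(n:ℝ)+1)) := by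
      push_cast; ring
    simp only [hs]
    rw [h, Real.sin_two_mul, hv k]
    ring
  -- the product of s(2k) equals a sign times the product of s k
  have hstep1 : ∏ k ∈ Finset.Icc 1 n, s (2*k)
      = ∏ k ∈ Finset.Icc 1 n,
          ((if 2*k ≤ n then (1:ℝ) else -1) * s (if 2*k ≤ n then 2*k else 2*n+1-2*k)) := by
    apply Finset.prod_congr rfl
    intro k hk
    simp only [Finset.mem_Icc] at hk
    by_cases h : 2*k ≤ n
    · simp [h]
    · rw [if_neg h, if_neg h, hsign k (by omega) (by omega)]; ring
  have hbij : ∏ k ∈ Finset.Icc 1 n, s (if 2*k ≤ n then 2*k else 2*n+1-2*k)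
      = ∏ j ∈ Finset.Icc 1 n, s j := by
    apply Finset.prod_nbij' (fun k => if 2*k ≤ n then 2*k else 2*n+1-2*k)
      (fun j => if j % 2 = 0 then j / 2 else (2*n+1-j)/2)
    · intro k hk
      simp only [Finset.mem_Icc] at hk ⊢
      split_ifs with h <;> omega
    · intro j hj
      simp only [Finset.mem_Icc] at hj ⊢
      split_ifs with h <;> omega
    · intro k hk
      simp only [Finset.mem_Icc] at hk
      split_ifs with h1 h2 h3 <;> omega
    · intro j hj
      simp only [Finset.mem_Icc] at hj
      split_ifs with h1 h2 h3 <;> omega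
    · intro k hk
      rfl
  have hsignprod : ∏ k ∈ Finset.Icc 1 n, (if 2*k ≤ n then (1:ℝ) else -1)
      = (-1:ℝ)^(n - n/2) := by
    rw [Finset.prod_ite, Finset.prod_const_one, Finset.prod_const, one_mul]
    congr 1
    have : (Finset.Icc 1 n).filter (fun k => ¬ 2*k ≤ n) = Finset.Icc (n/2+1) n := by
      ext k
      simp only [Finset.mem_filter, Finset.mem_Icc]
      omega
    rw [this, Nat.card_Icc]
    omega
  have hS : (0:ℝ) < ∏ j ∈ Finset.Icc 1 n, s j := Finset.prod_pos hpos
  have hmain : (∏ k ∈ Finset.Icc 1 n, v k) * ∏ j ∈ Finset.Icc 1 n, s j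
      = (-1:ℝ)^(n - n/2) * ∏ j ∈ Finset.Icc 1 n, s j := by
    rw [← Finset.prod_mul_distrib]
    calc ∏ k ∈ Finset.Icc 1 n, (v k * s k)
        = ∏ k ∈ Finset.Icc 1 n, s (2*k) := by
          exact (Finset.prod_congr rfl fun k _ => (hdouble k).symm)
      _ = (-1:ℝ)^(n - n/2) * ∏ j ∈ Finset.Icc 1 n, s j := by
          rw [hstep1, Finset.prod_mul_distrib, hsignprod, hbij]
  have hP : ∏ k ∈ Finset.Icc 1 n, v k = (-1:ℝ)^(n - n/2) :=
    mul_right_cancel₀ (ne_of_gt hS) hmain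
  rw [hP]
  rcases Nat.even_or_odd n with he | ho
  · rw [if_pos he]
    congr 1
    rw [Nat.even_iff] at he
    omega
  · rw [if_neg (Nat.not_even_iff_odd.mpr ho)]
    congr 1
    rw [Nat.odd_iff] at ho
    omega
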